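/- Let φ : (0,∞) → ℝ be a function for which there is a constant C₀ with |φ(r) − r⁻² − 2r⁻⁴| ≤ C₀·r⁻⁶ for all r ≥ 1, and let ζ : (0, 9/8] → ℝ be continuous with ζ(1) = −7/4. Then there exist θ ∈ (0, 1/8) and a₀ ≥ 1 such that for all a ≥ a₀ and all s ∈ [1−θ, 1+θ]: φ(a·s) − a⁻² + a⁻⁴·ζ(s) ≥ a⁻²·(s⁻² − 1) + (1/16)·a⁻⁴. -/
import Mathlib


set_option maxHeartbeats 1000000 in
/-- Proposition 2.4 (positivity of the barrier near `s = 1`): if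
`φ(r) = r⁻² + 2r⁻⁴ + O(r⁻⁶)` and `ζ` is continuous on `(0, 9/8]` with
`ζ(1) = −7/4`, then there are `θ ∈ (0,1/8)` and `a₀ ≥ 1` such that
`φ(a·s) − a⁻² + a⁻⁴·ζ(s) ≥ a⁻²(s⁻²−1) + (1/16)a⁻⁴` for `a ≥ a₀`,
`s ∈ [1−θ, 1+θ]`. -/
theorem stmt_2
    (φ ζ : ℝ → ℝ) (C₀ : ℝ)
    (hφasym : ∀ r ≥ (1:ℝ), |φ r - (r^2)⁻¹ - 2 * (r^4)⁻¹| ≤ C₀ * (r^6)⁻¹)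
    (hζcont : ContinuousOn ζ (Set.Ioc 0 (9/8)))
    (hζ1 : ζ 1 = -7/4) :
    ∃ θ ∈ Set.Ioo (0:ℝ) (1/8), ∃ a₀ : ℝ, 1 ≤ a₀ ∧ ∀ a : ℝ, a₀ ≤ a →
      ∀ s ∈ Set.Icc (1 - θ) (1 + θ),
        φ (a * s) - (a^2)⁻¹ + (a^4)⁻¹ * ζ s
          ≥ (a^2)⁻¹ * ((s^2)⁻¹ - 1) + (1/16) * (a^4)⁻¹ := by
  -- continuity of ζ at 1
  have hmem : Set.Ioc (0:ℝ) (9/8) ∈ nhds (1:ℝ) :=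
    Ioc_mem_nhds (by norm_num) (by norm_num)
  have hcont : ContinuousAt ζ 1 := hζcont.continuousAt hmem
  have hev : ∀ᶠ s in nhds (1:ℝ), -7/4 - 1/100 < ζ s := by
    have : {y : ℝ | -7/4 - 1/100 < y} ∈ nhds (ζ 1) :=
      lt_mem_nhds (by rw [hζ1]; norm_num)
    exact hcont this
  rw [Metric.eventually_nhds_iff] at hev
  obtain ⟨ε, hε, hεζ⟩ := hev
  refine ⟨min (ε/2) (1/100), ⟨by positivity, by
      have := min_le_right (ε/2) (1/100 : ℝ); linarith⟩,
    100 * (|C₀| + 1), by nlinarith [abs_nonneg C₀], ?_⟩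
  intro a ha s hs
  set θ : ℝ := min (ε/2) (1/100) with hθ
  have hθ1 : θ ≤ 1/100 := min_le_right _ _
  have hθ2 : θ ≤ ε/2 := min_le_left _ _
  obtain ⟨hs1, hs2⟩ := hs
  have hsl : (99/100 : ℝ) ≤ s := by linarith
  have hsu : s ≤ 101/100 := by linarith
  have hCnn : (0:ℝ) ≤ |C₀| := abs_nonneg C₀
  have ha100 : (100:ℝ) ≤ a := by nlinarith
  have hs0 : (0:ℝ) < s := by linarith
  have ha0 : (0:ℝ) < a := by linarith
  have hζs : -7/4 - 1/100 < ζ s := by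
    apply hεζ
    rw [Real.dist_eq]
    rw [abs_sub_lt_iff]
    constructor <;> linarith
  -- a * s ≥ 1
  have hras : (1:ℝ) ≤ a * s := by nlinarith
  have hE := hφasym (a*s) hras
  rw [abs_le] at hE
  have hφlb : φ (a*s) ≥ ((a*s)^2)⁻¹ + 2 * ((a*s)^4)⁻¹ - C₀ * ((a*s)^6)⁻¹ := by
    linarith [hE.1]
  -- bound a², s powers
  have ha2 : 100 * (|C₀| + 1) ≤ a^2 := by nlinarith
  have ha2pos : (0:ℝ) < a^2 := by positivity
  have hs2pos : (0:ℝ) < s^2 := by positivity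
  have hs4pos : (0:ℝ) < s^4 := by positivity
  have hs6pos : (0:ℝ) < s^6 := by positivity
  -- bound on (s^4)⁻¹ from below
  have h4 : ((101/100:ℝ)^4)⁻¹ ≤ (s^4)⁻¹ := by
    exact inv_anti₀ hs4pos (pow_le_pow_left₀ hs0.le hsu 4)
  -- bound on error term
  have h6 : (s^6)⁻¹ ≤ ((99/100:ℝ)^6)⁻¹ := by
    exact inv_anti₀ (by positivity) (pow_le_pow_left₀ (by norm_num) hsl 6)
  have herr : C₀ * (s^6)⁻¹ * (a^2)⁻¹ ≤ 1/50 := by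
    have h1 : C₀ * (s^6)⁻¹ * (a^2)⁻¹ ≤ |C₀| * ((99/100:ℝ)^6)⁻¹ * (a^2)⁻¹ := by
      apply mul_le_mul_of_nonneg_right _ (inv_pos.mpr ha2pos).le
      exact mul_le_mul (le_abs_self _) h6 (inv_pos.mpr hs6pos).le hCnn
    have h2 : (a^2)⁻¹ ≤ (100 * (|C₀| + 1))⁻¹ := by
      apply inv_anti₀ (by positivity) ha2
    have h3 : |C₀| * ((99/100:ℝ)^6)⁻¹ * (a^2)⁻¹ ≤
        |C₀| * ((99/100:ℝ)^6)⁻¹ * (100 * (|C₀| + 1))⁻¹ := by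
      apply mul_le_mul_of_nonneg_left h2 (by positivity)
    have hA : |C₀| * (100 * (|C₀| + 1))⁻¹ ≤ 1/100 := by
      rw [mul_inv_le_iff₀ (by positivity)]
      nlinarith
    have hB : ((99/100:ℝ)^6)⁻¹ ≤ 2 := by norm_num
    have h5 : |C₀| * ((99/100:ℝ)^6)⁻¹ * (100 * (|C₀| + 1))⁻¹ ≤ 1/50 := by
      have := mul_le_mul hA hB (by positivity) (by norm_num)
      nlinarith
    linarith
  -- key estimate
  have key : (1/16 : ℝ) ≤ 2 * (s^4)⁻¹ + ζ s - C₀ * (s^6)⁻¹ * (a^2)⁻¹ := by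
    have : ((101/100:ℝ)^4)⁻¹ ≥ 9/10 := by norm_num
    linarith
  -- put things together
  have e2 : ((a*s)^2)⁻¹ = (a^2)⁻¹ * (s^2)⁻¹ := by rw [mul_pow, mul_inv]
  have e4 : ((a*s)^4)⁻¹ = (a^4)⁻¹ * (s^4)⁻¹ := by rw [mul_pow, mul_inv]
  have e6 : ((a*s)^6)⁻¹ = (a^4)⁻¹ * (s^6)⁻¹ * (a^2)⁻¹ := by
    rw [mul_pow, mul_inv]
    rw [show a^6 = a^4 * a^2 by ring, mul_inv]
    ring
  have ha4pos : (0:ℝ) < (a^4)⁻¹ := by positivity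
  have hfin := mul_le_mul_of_nonneg_left key ha4pos.le
  rw [e2, e4, e6] at hφlb
  nlinarith [hφlb, hfin]
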